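/- Given an optimal Steiner forest F* and the final clustering C^f of the gluttonous algorithm, there exists a feasible solution F** with cost(F**) ≤ cost(F*) + width(F*) ≤ 2·cost(F*) such that F** is faithful to C^f, i.e., every supernode of C^f is contained in a single tree of F**. -/

import Mathlib

open scoped Classical

/-- The cost of a chain of vertices, where a step within a supernode is free and a
step between supernodes costs the underlying metric distance. -/
noncomputable def chainCost {V ι : Type*} (d : V → V → ℝ) (cl : V → ι) : List V → ℝ
  | [] => 0
  | [_] => 0
  | a :: b :: rest => (if cl a = cl b then 0 else d a b) + chainCost d cl (b :: rest)

/-- The `C`-punctured distance `d_{M/C}(u,v)`. -/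
noncomputable def pDist {V ι : Type*} (d : V → V → ℝ) (cl : V → ι) (u v : V) : ℝ :=
  sInf {x | ∃ l : List V, l.head? = some u ∧ l.getLast? = some v ∧ x = chainCost d cl l}

/-- The punctured distance between two supernodes. -/
noncomputable def superDist {V ι : Type*} (d : V → V → ℝ) (cl : V → ι) (A B : ι) : ℝ :=
  sInf {x | ∃ u v, cl u = A ∧ cl v = B ∧ x = pDist d cl u v}

/-- A supernode is active if it contains one endpoint of some demand pair but not the
other (i.e., some terminal in it is not yet connected to its mate). -/
def isActive {V : Type*} (D : Finset (V × V)) (c : V → ℕ) (i : ℕ) : Prop :=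
  ∃ p ∈ D, (c p.1 = i ∧ c p.2 ≠ i) ∨ (c p.2 = i ∧ c p.1 ≠ i)

/-- A (terminating) run of the gluttonous algorithm on the instance `(d, D)`:
starting from the trivial clustering, at each step the two closest active supernodes
are merged, until no active supernode remains. -/
structure GRun (V : Type*) [Fintype V] (d : V → V → ℝ) (D : Finset (V × V)) where
  steps : ℕ
  cl : ℕ → V → ℕ
  S : ℕ → ℕ
  T : ℕ → ℕ
  /-- initially every vertex is its own supernode -/
  init : ∀ u v : V, cl 0 u = cl 0 v → u = v
  distinct : ∀ t < steps, S t ≠ T t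
  activeS : ∀ t < steps, isActive D (cl t) (S t)
  activeT : ∀ t < steps, isActive D (cl t) (T t)
  /-- the merged pair is at minimum punctured distance among active pairs -/
  min_dist : ∀ t < steps, ∀ A B, isActive D (cl t) A → isActive D (cl t) B → A ≠ B →
    superDist d (cl t) (S t) (T t) ≤ superDist d (cl t) A B
  /-- merging rule -/
  merge : ∀ t < steps, ∀ v, cl (t + 1) v = if cl t v = T t then S t else cl t v
  /-- at the end no supernode is active -/
  final : ∀ i, ¬ isActive D (cl steps) i

/-- The cost of a forest: the total length of its edges. -/
noncomputable def gcost {V : Type*} [Fintype V] (w : Sym2 V → ℝ) (G : SimpleGraph V) : ℝ :=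
  ∑ e ∈ G.edgeFinset, w e

/-- The total weight of a walk. -/
noncomputable def walkWeight {V : Type*} {G : SimpleGraph V} (w : Sym2 V → ℝ)
    {u v : V} (p : G.Walk u v) : ℝ :=
  (p.edges.map w).sum

/-- The tree distance between two vertices of a forest. -/
noncomputable def treeDist {V : Type*} (G : SimpleGraph V) (w : Sym2 V → ℝ)
    (u v : V) : ℝ :=
  sInf {x | ∃ p : G.Walk u v, p.IsPath ∧ x = walkWeight w p}

/-- The width of the tree of `G` containing a connected component `c`. -/
noncomputable def compWidth {V : Type*} [Fintype V] (G : SimpleGraph V)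
    (w : Sym2 V → ℝ) (D : Finset (V × V)) (c : G.ConnectedComponent) : ℝ :=
  sSup {x | ∃ p ∈ D, G.connectedComponentMk p.1 = c ∧ x = treeDist G w p.1 p.2}

/-- The width of a forest: the sum of the widths of its trees. -/
noncomputable def gwidth {V : Type*} [Fintype V] (w : Sym2 V → ℝ) (G : SimpleGraph V)
    (D : Finset (V × V)) : ℝ :=
  ∑ c : G.ConnectedComponent, compWidth G w D c

section ChainLemmas
variable {V ι : Type*} (d : V → V → ℝ) (cl : V → ι)

lemma chainCost_nonneg (hd : ∀ u v, 0 ≤ d u v) : ∀ l : List V, 0 ≤ chainCost d cl l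
  | [] => le_of_eq rfl
  | [_] => le_of_eq rfl
  | a :: b :: r => by
      have h := chainCost_nonneg hd (b :: r)
      rw [chainCost]
      have : 0 ≤ (if cl a = cl b then 0 else d a b) := by
        split <;> simp [hd]
      linarith

lemma chainCost_append : ∀ (xs : List V) (a : V) (ys : List V),
    chainCost d cl (xs ++ a :: ys) = chainCost d cl (xs ++ [a]) + chainCost d cl (a :: ys)
  | [], a, ys => by simp [chainCost]
  | [b], a, ys => by simp [chainCost]
  | b :: c :: xs, a, ys => by
      have ih := chainCost_append (c :: xs) a ys
      simp only [List.cons_append, chainCost] at *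
      rw [ih]; ring

lemma chainCost_splice (hd : ∀ u v, 0 ≤ d u v) (l1 l2 l3 : List V) (a : V) :
    chainCost d cl (l1 ++ a :: l3) ≤ chainCost d cl (l1 ++ a :: (l2 ++ a :: l3)) := by
  rw [chainCost_append d cl l1 a l3, chainCost_append d cl l1 a (l2 ++ a :: l3)]
  have h2 : chainCost d cl (a :: (l2 ++ a :: l3))
      = chainCost d cl ((a :: l2) ++ [a]) + chainCost d cl (a :: l3) := by
    simpa using chainCost_append d cl (a :: l2) a l3
  rw [h2]
  have := chainCost_nonneg d cl hd ((a :: l2) ++ [a])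
  linarith

lemma exists_dup_decomp {α : Type*} : ∀ {l : List α}, ¬ l.Nodup →
    ∃ (a : α) (l1 l2 l3 : List α), l = l1 ++ a :: (l2 ++ a :: l3) := by
  intro l
  induction l with
  | nil => simp
  | cons b t ih =>
    intro h
    by_cases hb : b ∈ t
    · obtain ⟨l2, l3, rfl⟩ := List.append_of_mem hb
      exact ⟨b, [], l2, l3, by simp⟩
    · have ht : ¬ t.Nodup := by
        intro hn; exact h (List.nodup_cons.mpr ⟨hb, hn⟩)
      obtain ⟨a, l1, l2, l3, rfl⟩ := ih ht
      exact ⟨a, b :: l1, l2, l3, by simp⟩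

lemma chain_reduce (hd : ∀ u v, 0 ≤ d u v) : ∀ (l : List V),
    ∃ l' : List V, l'.Nodup ∧ l'.head? = l.head? ∧ l'.getLast? = l.getLast? ∧
      chainCost d cl l' ≤ chainCost d cl l := by
  intro l
  generalize hn : l.length = n
  induction n using Nat.strong_induction_on generalizing l with
  | _ n ih =>
    by_cases h : l.Nodup
    · exact ⟨l, h, rfl, rfl, le_refl _⟩
    · obtain ⟨a, l1, l2, l3, rfl⟩ := exists_dup_decomp h
      have hlen : (l1 ++ a :: l3).length < n := by
        subst hn; simp
      obtain ⟨l', h1, h2, h3, h4⟩ := ih _ hlen _ rfl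
      refine ⟨l', h1, ?_, ?_, h4.trans (chainCost_splice d cl hd l1 l2 l3 a)⟩
      · rw [h2]; cases l1 <;> simp
      · rw [h3]
        rw [List.getLast?_append_cons, List.getLast?_append_cons]
        induction l2 <;> simp_all [List.getLast?_cons]
end ChainLemmas

section PD
variable {V ι : Type*} (d : V → V → ℝ) (cl : V → ι) (hd : ∀ u v, 0 ≤ d u v)
include hd
set_option linter.unusedSectionVars false

lemma pDist_set_nonempty (u v : V) :
    {x | ∃ l : List V, l.head? = some u ∧ l.getLast? = some v ∧ x = chainCost d cl l}.Nonempty :=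
  ⟨chainCost d cl [u, v], [u, v], rfl, rfl, rfl⟩

lemma pDist_set_bddBelow (u v : V) :
    BddBelow {x | ∃ l : List V, l.head? = some u ∧ l.getLast? = some v ∧ x = chainCost d cl l} := by
  refine ⟨0, fun x hx => ?_⟩
  obtain ⟨l, -, -, rfl⟩ := hx
  exact chainCost_nonneg d cl hd l

lemma pDist_le_chainCost {u v : V} (l : List V) (hh : l.head? = some u)
    (hl : l.getLast? = some v) : pDist d cl u v ≤ chainCost d cl l :=
  csInf_le (pDist_set_bddBelow d cl hd u v) ⟨l, hh, hl, rfl⟩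

lemma pDist_nonneg (u v : V) : 0 ≤ pDist d cl u v :=
  le_csInf (pDist_set_nonempty d cl hd u v) (by rintro x ⟨l, -, -, rfl⟩; exact chainCost_nonneg d cl hd l)

lemma exists_chain_pDist [Fintype V] (u v : V) :
    ∃ l : List V, l.head? = some u ∧ l.getLast? = some v ∧
      chainCost d cl l = pDist d cl u v := by
  set Sset := {x | ∃ l : List V, l.head? = some u ∧ l.getLast? = some v ∧ x = chainCost d cl l} with hS
  set S' := {x | ∃ l : List V, l.Nodup ∧ l.head? = some u ∧ l.getLast? = some v ∧ x = chainCost d cl l} with hS'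
  have hsub : S' ⊆ Sset := by rintro x ⟨l, -, h1, h2, rfl⟩; exact ⟨l, h1, h2, rfl⟩
  have hne' : S'.Nonempty := by
    by_cases huv : u = v
    · exact ⟨chainCost d cl [u], [u], List.nodup_singleton u, rfl, by simp [huv], rfl⟩
    · exact ⟨chainCost d cl [u, v], [u, v], by simp [huv], rfl, rfl, rfl⟩
  have hfin : S'.Finite := by
    have : S' ⊆ (chainCost d cl) '' {l : List V | l.length ≤ Fintype.card V} := by
      rintro x ⟨l, hnd, -, -, rfl⟩
      exact ⟨l, hnd.length_le_card, rfl⟩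
    exact ((List.finite_length_le V (Fintype.card V)).image _).subset this
  have hmem : sInf S' ∈ S' := hne'.csInf_mem hfin
  have heq : sInf S' = pDist d cl u v := by
    refine le_antisymm ?_ ?_
    · refine le_csInf (pDist_set_nonempty d cl hd u v) ?_
      rintro x ⟨l, h1, h2, rfl⟩
      obtain ⟨l', hnd, hh, hl, hle⟩ := chain_reduce d cl hd l
      refine le_trans (csInf_le ?_ ⟨l', hnd, hh.trans h1, hl.trans h2, rfl⟩) hle
      exact ⟨0, fun x hx => by obtain ⟨l, -, -, -, rfl⟩ := hx; exact chainCost_nonneg d cl hd l⟩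
    · exact csInf_le_csInf (pDist_set_bddBelow d cl hd u v) hne' hsub
  obtain ⟨l, -, h1, h2, h3⟩ := hmem
  exact ⟨l, h1, h2, by rw [← h3, heq]⟩

lemma superDist_le_pDist {A B : ι} {u v : V} (hu : cl u = A) (hv : cl v = B) :
    superDist d cl A B ≤ pDist d cl u v := by
  refine csInf_le ⟨0, ?_⟩ ⟨u, v, hu, hv, rfl⟩
  rintro x ⟨u', v', -, -, rfl⟩
  exact pDist_nonneg d cl hd u' v'

lemma exists_chain_superDist [Fintype V] {A B : ι} (hA : ∃ u, cl u = A) (hB : ∃ v, cl v = B) :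
    ∃ (u v : V) (l : List V), cl u = A ∧ cl v = B ∧ l.head? = some u ∧ l.getLast? = some v ∧
      chainCost d cl l = superDist d cl A B := by
  obtain ⟨u0, hu0⟩ := hA; obtain ⟨v0, hv0⟩ := hB
  have hne : {x | ∃ u v, cl u = A ∧ cl v = B ∧ x = pDist d cl u v}.Nonempty :=
    ⟨pDist d cl u0 v0, u0, v0, hu0, hv0, rfl⟩
  have hfin : {x | ∃ u v, cl u = A ∧ cl v = B ∧ x = pDist d cl u v}.Finite := by
    have : {x | ∃ u v, cl u = A ∧ cl v = B ∧ x = pDist d cl u v}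
        ⊆ Set.range (fun p : V × V => pDist d cl p.1 p.2) := by
      rintro x ⟨u, v, -, -, rfl⟩; exact ⟨(u, v), rfl⟩
    exact (Set.finite_range _).subset this
  have hmem := hne.csInf_mem hfin
  obtain ⟨u, v, hu, hv, hx⟩ := hmem
  obtain ⟨l, h1, h2, h3⟩ := exists_chain_pDist d cl hd u v
  exact ⟨u, v, l, hu, hv, h1, h2, by rw [h3, ← hx]; rfl⟩
end PD

/-- The inter-supernode edges along a chain. -/
noncomputable def chainEdges {V ι : Type*} (cl : V → ι) : List V → Finset (Sym2 V)
  | [] => ∅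
  | [_] => ∅
  | a :: b :: rest => (if cl a = cl b then ∅ else {s(a, b)}) ∪ chainEdges cl (b :: rest)

section GraphL
variable {V ι : Type*} [Fintype V] (d : V → V → ℝ) (cl : V → ι) (w : Sym2 V → ℝ)
set_option linter.unusedSectionVars false

lemma w_nonneg (hd : ∀ u v, 0 ≤ d u v) (hwd : ∀ u v : V, w s(u, v) = d u v) :
    ∀ e : Sym2 V, 0 ≤ w e := by
  intro e
  induction e with
  | _ u v => rw [hwd]; exact hd u v

lemma sum_union_le' {α : Type*} [DecidableEq α] (A B : Finset α) (f : α → ℝ)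
    (hf : ∀ a, 0 ≤ f a) :
    ∑ x ∈ A ∪ B, f x ≤ ∑ x ∈ A, f x + ∑ x ∈ B, f x := by
  rw [← Finset.union_sdiff_self_eq_union, Finset.sum_union Finset.sdiff_disjoint.symm]
  refine add_le_add_right (Finset.sum_le_sum_of_subset_of_nonneg ?_ fun i _ _ => hf i) _
  exact Finset.sdiff_subset

lemma sum_chainEdges_le (hd : ∀ u v, 0 ≤ d u v) (hwd : ∀ u v : V, w s(u, v) = d u v) :
    ∀ l : List V, ∑ e ∈ chainEdges cl l, w e ≤ chainCost d cl l
  | [] => by simp [chainEdges, chainCost]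
  | [_] => by simp [chainEdges, chainCost]
  | a :: b :: r => by
      have ih := sum_chainEdges_le hd hwd (b :: r)
      rw [chainEdges, chainCost]
      refine le_trans (sum_union_le' _ _ _ (w_nonneg d w hd hwd)) ?_
      refine add_le_add ?_ ih
      split
      · simp
      · simp [hwd]

lemma gcost_le_sum (hw : ∀ e : Sym2 V, 0 ≤ w e) (G : SimpleGraph V) (E : Finset (Sym2 V))
    (hE : G.edgeSet ⊆ ↑E) : gcost w G ≤ ∑ e ∈ E, w e := by
  refine Finset.sum_le_sum_of_subset_of_nonneg ?_ (fun i _ _ => hw i)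
  intro e he
  exact hE (SimpleGraph.mem_edgeFinset.mp he)

lemma gcost_chainEdges_le (hd : ∀ u v, 0 ≤ d u v) (hwd : ∀ u v : V, w s(u, v) = d u v)
    (l : List V) :
    gcost w (SimpleGraph.fromEdgeSet ↑(chainEdges cl l)) ≤ chainCost d cl l := by
  refine le_trans (gcost_le_sum w (w_nonneg d w hd hwd) _ (chainEdges cl l) ?_)
    (sum_chainEdges_le d cl w hd hwd l)
  rw [SimpleGraph.edgeSet_fromEdgeSet]
  exact Set.diff_subset

lemma gcost_nonneg (hw : ∀ e : Sym2 V, 0 ≤ w e) (G : SimpleGraph V) : 0 ≤ gcost w G :=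
  Finset.sum_nonneg fun e _ => hw e

lemma gcost_sup_le (hw : ∀ e : Sym2 V, 0 ≤ w e) (F G : SimpleGraph V) :
    gcost w (F ⊔ G) ≤ gcost w F + gcost w G := by
  classical
  refine le_trans (gcost_le_sum w hw _ (F.edgeFinset ∪ G.edgeFinset) ?_) ?_
  · rw [SimpleGraph.edgeSet_sup]
    intro e he
    simp only [Finset.coe_union, Set.mem_union, SimpleGraph.coe_edgeFinset]
    exact he
  · exact sum_union_le' _ _ _ hw

lemma chain_reachable (F : SimpleGraph V) (hcl : ∀ u v : V, cl u = cl v → F.Reachable u v) :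
    ∀ (l : List V) (u v : V), l.head? = some u → l.getLast? = some v →
      (F ⊔ SimpleGraph.fromEdgeSet ↑(chainEdges cl l)).Reachable u v
  | [], u, v => by intro h; simp at h
  | [a], u, v => by
      intro hu hv
      simp only [List.head?_cons, Option.some.injEq] at hu
      simp only [List.getLast?_singleton, Option.some.injEq] at hv
      subst hu
      rw [← hv]
  | a :: b :: r, u, v => by
      intro hu hv
      simp only [List.head?_cons, Option.some.injEq] at hu
      subst hu
      have hv' : (b :: r).getLast? = some v := by
        simpa [List.getLast?_cons] using hv
      have hstep : (F ⊔ SimpleGraph.fromEdgeSet ↑(chainEdges cl (a :: b :: r))).Reachable a b := by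
        by_cases h : cl a = cl b
        · exact (hcl a b h).mono le_sup_left
        · have hab : a ≠ b := fun hab => h (by rw [hab])
          have hadj : (SimpleGraph.fromEdgeSet ↑(chainEdges cl (a :: b :: r))).Adj a b := by
            rw [SimpleGraph.fromEdgeSet_adj]
            refine ⟨?_, hab⟩
            simp [chainEdges, h]
          exact (hadj.reachable).mono le_sup_right
      have hrest := chain_reachable F hcl (b :: r) b v rfl hv'
      have hmono : (F ⊔ SimpleGraph.fromEdgeSet ↑(chainEdges cl (b :: r)))
          ≤ F ⊔ SimpleGraph.fromEdgeSet ↑(chainEdges cl (a :: b :: r)) := by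
        refine sup_le_sup_left (SimpleGraph.fromEdgeSet_mono ?_) _
        rw [chainEdges]
        intro e he
        simp only [Finset.coe_union, Set.mem_union]
        exact Or.inr he
      exact hstep.trans (hrest.mono hmono)

end GraphL

section TD
variable {V : Type*} (w : Sym2 V → ℝ)

lemma walkWeight_nonneg (hw : ∀ e : Sym2 V, 0 ≤ w e) {G : SimpleGraph V} {u v : V}
    (p : G.Walk u v) : 0 ≤ walkWeight w p := by
  refine List.sum_nonneg ?_
  intro x hx
  obtain ⟨e, -, rfl⟩ := List.mem_map.mp hx
  exact hw e

lemma walkWeight_cons {G : SimpleGraph V} {a b c : V} (h : G.Adj a b) (p : G.Walk b c) :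
    walkWeight w (p.cons h) = w s(a, b) + walkWeight w p := by
  simp [walkWeight, SimpleGraph.Walk.edges_cons]

lemma walkWeight_reverse {G : SimpleGraph V} {u v : V} (p : G.Walk u v) :
    walkWeight w p.reverse = walkWeight w p := by
  simp [walkWeight, SimpleGraph.Walk.edges_reverse, List.map_reverse, List.sum_reverse]

lemma chainCost_support_le {ι : Type*} (d : V → V → ℝ) (cl : V → ι)
    (hd : ∀ u v, 0 ≤ d u v) (hwd : ∀ u v : V, w s(u, v) = d u v) {G : SimpleGraph V}
    {a b : V} (p : G.Walk a b) : chainCost d cl p.support ≤ walkWeight w p := by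
  induction p with
  | nil => simp [SimpleGraph.Walk.support_nil, chainCost, walkWeight]
  | @cons u x y h q ih =>
    rw [SimpleGraph.Walk.support_cons, q.support_eq_cons, chainCost, ← q.support_eq_cons,
      walkWeight_cons]
    have step : (if cl u = cl x then 0 else d u x) ≤ w s(u, x) := by
      rw [hwd]; split
      · exact hd u x
      · exact le_refl _
    linarith

lemma treeDist_le_walkWeight (hw : ∀ e : Sym2 V, 0 ≤ w e) {G : SimpleGraph V} {u v : V}
    (p : G.Walk u v) (hp : p.IsPath) : treeDist G w u v ≤ walkWeight w p := by
  refine csInf_le ⟨0, ?_⟩ ⟨p, hp, rfl⟩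
  rintro x ⟨q, -, rfl⟩
  exact walkWeight_nonneg w hw q

lemma treeDist_nonneg (hw : ∀ e : Sym2 V, 0 ≤ w e) (G : SimpleGraph V) (u v : V) :
    0 ≤ treeDist G w u v := by
  unfold treeDist
  rcases Set.eq_empty_or_nonempty {x | ∃ p : G.Walk u v, p.IsPath ∧ x = walkWeight w p}
    with h | h
  · rw [h, Real.sInf_empty]
  · refine le_csInf h ?_
    rintro x ⟨q, -, rfl⟩
    exact walkWeight_nonneg w hw q

lemma treeDist_symm (G : SimpleGraph V) (u v : V) :
    treeDist G w u v = treeDist G w v u := by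
  unfold treeDist
  congr 1
  ext x
  constructor <;> rintro ⟨p, hp, rfl⟩ <;>
    exact ⟨p.reverse, hp.reverse, (walkWeight_reverse w p).symm⟩

lemma pDist_le_treeDist {ι : Type*} (d : V → V → ℝ) (cl : V → ι)
    (hd : ∀ u v, 0 ≤ d u v) (hwd : ∀ u v : V, w s(u, v) = d u v) {G : SimpleGraph V}
    {u v : V} (h : G.Reachable u v) : pDist d cl u v ≤ treeDist G w u v := by
  obtain ⟨q⟩ := h
  refine le_csInf ⟨walkWeight w q.toPath.1, q.toPath.1, q.toPath.2, rfl⟩ ?_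
  rintro x ⟨p, hp, rfl⟩
  refine le_trans (pDist_le_chainCost d cl hd p.support ?_ ?_)
    (chainCost_support_le w d cl hd hwd p)
  · rw [p.support_eq_cons]; rfl
  · rw [List.getLast?_eq_getLast (l := p.support) (by simp), p.getLast_support]

lemma compWidth_bddAbove [Fintype V] (G : SimpleGraph V) (D : Finset (V × V))
    (c : G.ConnectedComponent) :
    BddAbove {x | ∃ p ∈ D, G.connectedComponentMk p.1 = c ∧ x = treeDist G w p.1 p.2} := by
  refine Set.Finite.bddAbove (Set.Finite.subset (Set.Finite.image
    (fun p : V × V => treeDist G w p.1 p.2) D.finite_toSet) ?_)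
  rintro x ⟨p, hp, -, rfl⟩
  exact ⟨p, hp, rfl⟩

lemma treeDist_le_compWidth [Fintype V] (G : SimpleGraph V) (D : Finset (V × V))
    {p : V × V} (hp : p ∈ D) {c : G.ConnectedComponent}
    (hc : G.connectedComponentMk p.1 = c) :
    treeDist G w p.1 p.2 ≤ compWidth G w D c :=
  le_csSup (compWidth_bddAbove w G D c) ⟨p, hp, hc, rfl⟩

lemma compWidth_nonneg [Fintype V] (hw : ∀ e : Sym2 V, 0 ≤ w e) (G : SimpleGraph V)
    (D : Finset (V × V)) (c : G.ConnectedComponent) : 0 ≤ compWidth G w D c := by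
  unfold compWidth
  rcases Set.eq_empty_or_nonempty
    {x | ∃ p ∈ D, G.connectedComponentMk p.1 = c ∧ x = treeDist G w p.1 p.2} with h | h
  · rw [h, Real.sSup_empty]
  · obtain ⟨x, hx⟩ := h
    obtain ⟨p, hp, hc, rfl⟩ := hx
    exact le_trans (treeDist_nonneg w hw G p.1 p.2)
      (le_csSup (compWidth_bddAbove w G D c) ⟨p, hp, hc, rfl⟩)

noncomputable def ecomp {V : Type*} (G : SimpleGraph V) (e : Sym2 V) : G.ConnectedComponent :=
  G.connectedComponentMk (Quot.out e).1

set_option maxHeartbeats 1000000 in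
lemma gwidth_le_gcost [Fintype V] (G : SimpleGraph V)
    (hw : ∀ e : Sym2 V, 0 ≤ w e) (D : Finset (V × V))
    (hsol : ∀ p ∈ D, G.Reachable p.1 p.2) : gwidth w G D ≤ gcost w G := by
  classical
  have hfib : ∑ c : G.ConnectedComponent,
      ∑ e ∈ G.edgeFinset.filter (fun e => ecomp G e = c), w e = gcost w G := by
    exact Finset.sum_fiberwise_of_maps_to (fun e _ => Finset.mem_univ (ecomp G e)) w
  rw [gwidth, ← hfib]
  apply Finset.sum_le_sum
  intro c _
  -- compWidth ≤ fiber sum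
  have hfibnn : 0 ≤ ∑ e ∈ G.edgeFinset.filter (fun e => ecomp G e = c), w e :=
    Finset.sum_nonneg fun e _ => hw e
  unfold compWidth
  rcases Set.eq_empty_or_nonempty
    {x | ∃ p ∈ D, G.connectedComponentMk p.1 = c ∧ x = treeDist G w p.1 p.2} with h | h
  · rw [h, Real.sSup_empty]; exact hfibnn
  refine csSup_le h ?_
  rintro x ⟨p, hp, hc, rfl⟩
  obtain ⟨q0⟩ := hsol p hp
  set q := q0.toPath.1 with hq
  have hqp : q.IsPath := q0.toPath.2
  refine le_trans (treeDist_le_walkWeight w hw q hqp) ?_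
  have hsum : walkWeight w q = ∑ e ∈ q.edges.toFinset, w e := by
    rw [List.sum_toFinset _ hqp.edges_nodup]
    rfl
  rw [hsum]
  refine Finset.sum_le_sum_of_subset_of_nonneg ?_ (fun i _ _ => hw i)
  intro e he
  rw [List.mem_toFinset] at he
  rw [Finset.mem_filter]
  refine ⟨SimpleGraph.mem_edgeFinset.mpr (q.edges_subset_edgeSet he), ?_⟩
  rw [ecomp, ← hc]
  have hsupp : (Quot.out e).1 ∈ q.support := by
    have hrep : s((Quot.out e).1, (Quot.out e).2) = e := by
      exact Quot.out_eq e
    rw [← hrep] at he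
    exact q.fst_mem_support_of_mem_edges he
  exact (SimpleGraph.ConnectedComponent.eq.mpr (⟨q.takeUntil _ hsupp⟩ :
    G.Reachable p.1 _)).symm
end TD

section MainSec
variable {V : Type*} [Fintype V]

/-- width of the `Fs`-component of a vertex -/
noncomputable def vwidth (w : Sym2 V → ℝ) (D : Finset (V × V)) (Fs : SimpleGraph V)
    (x : V) : ℝ :=
  compWidth Fs w D (Fs.connectedComponentMk x)

/-- each F-component contains an available `Fs`-component of maximal width -/
def RepInv (w : Sym2 V → ℝ) (D : Finset (V × V)) (Fs F : SimpleGraph V)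
    (U : Finset Fs.ConnectedComponent) : Prop :=
  ∀ x : V, ∃ y : V, F.Reachable x y ∧ Fs.connectedComponentMk y ∈ U ∧
    ∀ z : V, F.Reachable x z → vwidth w D Fs z ≤ vwidth w D Fs y

lemma rep_init (w : Sym2 V → ℝ) (D : Finset (V × V)) (Fs : SimpleGraph V) :
    RepInv w D Fs Fs Finset.univ := by
  intro x
  obtain ⟨y, hy, hmax⟩ := Finset.exists_max_image
    (Finset.univ.filter (fun z => Fs.Reachable x z)) (vwidth w D Fs) ⟨x, Finset.mem_filter.mpr ⟨Finset.mem_univ x, SimpleGraph.Reachable.refl x⟩⟩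
  exact ⟨y, (Finset.mem_filter.mp hy).2, Finset.mem_univ _,
    fun z hz => hmax z (by simp [hz])⟩

lemma rep_update (w : Sym2 V → ℝ) (D : Finset (V × V)) {Fs F F' : SimpleGraph V}
    (hFsF : Fs ≤ F') (hFF' : F ≤ F') {U : Finset Fs.ConnectedComponent} {a b : V}
    (hrep : RepInv w D Fs F U) (hab : F'.Reachable a b)
    (hbU : Fs.connectedComponentMk b ∈ U)
    (hne : Fs.connectedComponentMk a ≠ Fs.connectedComponentMk b)
    (hcmp : vwidth w D Fs a ≤ vwidth w D Fs b) :
    RepInv w D Fs F' (U.erase (Fs.connectedComponentMk a)) := by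
  intro x
  obtain ⟨y0, hy0, hmax⟩ := Finset.exists_max_image
    (Finset.univ.filter (fun z => F'.Reachable x z)) (vwidth w D Fs) ⟨x, Finset.mem_filter.mpr ⟨Finset.mem_univ x, SimpleGraph.Reachable.refl x⟩⟩
  have hy0' : F'.Reachable x y0 := (Finset.mem_filter.mp hy0).2
  have hmax' : ∀ z : V, F'.Reachable x z → vwidth w D Fs z ≤ vwidth w D Fs y0 :=
    fun z hz => hmax z (by simp [hz])
  obtain ⟨y1, hy01, hy1U, hy1max⟩ := hrep y0
  have hxy1 : F'.Reachable x y1 := hy0'.trans (hy01.mono hFF')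
  have hy1top : vwidth w D Fs y0 ≤ vwidth w D Fs y1 := hy1max y0 (SimpleGraph.Reachable.refl _)
  by_cases hk : Fs.connectedComponentMk y1 = Fs.connectedComponentMk a
  · have hy1a : Fs.Reachable y1 a := SimpleGraph.ConnectedComponent.eq.mp hk
    have hxb : F'.Reachable x b := (hxy1.trans ((hy1a.mono hFsF))).trans hab
    refine ⟨b, hxb, Finset.mem_erase.mpr ⟨Ne.symm hne, hbU⟩, ?_⟩
    intro z hz
    have h1 := hmax' z hz
    have hva : vwidth w D Fs y1 = vwidth w D Fs a := by
      unfold vwidth; rw [hk]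
    linarith
  · refine ⟨y1, hxy1, Finset.mem_erase.mpr ⟨hk, hy1U⟩, ?_⟩
    intro z hz
    exact (hmax' z hz).trans hy1top

lemma active_witness (d : V → V → ℝ) (w : Sym2 V → ℝ) (D : Finset (V × V))
    (Fs : SimpleGraph V) (R : GRun V d D)
    (hd : ∀ u v, 0 ≤ d u v) (hwd : ∀ u v : V, w s(u, v) = d u v)
    (hFssol : ∀ p ∈ D, Fs.Reachable p.1 p.2) {t : ℕ} {A : ℕ}
    (hA : isActive D (R.cl t) A) :
    ∃ x y : V, R.cl t x = A ∧ R.cl t y ≠ A ∧ isActive D (R.cl t) (R.cl t y) ∧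
      pDist d (R.cl t) x y ≤ vwidth w D Fs x := by
  obtain ⟨p, hp, hcase⟩ := hA
  rcases hcase with ⟨h1, h2⟩ | ⟨h1, h2⟩
  · refine ⟨p.1, p.2, h1, h2, ⟨p, hp, Or.inr ⟨rfl, fun h => h2 (h ▸ h1)⟩⟩, ?_⟩
    exact le_trans (pDist_le_treeDist w d (R.cl t) hd hwd (hFssol p hp))
      (treeDist_le_compWidth w Fs D hp rfl)
  · refine ⟨p.2, p.1, h1, h2, ⟨p, hp, Or.inl ⟨rfl, fun h => h2 (h ▸ h1)⟩⟩, ?_⟩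
    have h3 : pDist d (R.cl t) p.2 p.1 ≤ treeDist Fs w p.2 p.1 :=
      pDist_le_treeDist w d (R.cl t) hd hwd (hFssol p hp).symm
    rw [treeDist_symm w Fs p.2 p.1] at h3
    refine le_trans h3 (treeDist_le_compWidth w Fs D hp ?_)
    exact (SimpleGraph.ConnectedComponent.eq.mpr (hFssol p hp)).symm ▸ rfl

lemma main_invariant (d : V → V → ℝ) (w : Sym2 V → ℝ) (D : Finset (V × V))
    (Fs : SimpleGraph V) (R : GRun V d D)
    (hd : ∀ u v, 0 ≤ d u v) (hwd : ∀ u v : V, w s(u, v) = d u v)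
    (hFssol : ∀ p ∈ D, Fs.Reachable p.1 p.2) :
    ∀ t : ℕ, t ≤ R.steps → ∃ (F : SimpleGraph V) (U : Finset Fs.ConnectedComponent),
      Fs ≤ F ∧
      (∀ u v : V, R.cl t u = R.cl t v → F.Reachable u v) ∧
      gcost w F + ∑ c ∈ U, compWidth Fs w D c ≤ gcost w Fs + gwidth w Fs D ∧
      RepInv w D Fs F U := by
  intro t
  induction t with
  | zero =>
    intro _
    refine ⟨Fs, Finset.univ, le_refl _, ?_, ?_, rep_init w D Fs⟩
    · intro u v h
      have := R.init u v h
      subst this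
      exact SimpleGraph.Reachable.refl _
    · rw [gwidth]
  | succ t IH =>
    intro ht
    have htl : t < R.steps := Nat.lt_of_succ_le ht
    obtain ⟨F, U, hle, hconn, hcost, hrep⟩ := IH (le_of_lt htl)
    have hmerge := R.merge t htl
    have hnew : ∀ u v : V, R.cl (t + 1) u = R.cl (t + 1) v →
        R.cl t u = R.cl t v ∨ (R.cl t u = R.S t ∧ R.cl t v = R.T t) ∨
        (R.cl t u = R.T t ∧ R.cl t v = R.S t) := by
      intro u v h
      rw [hmerge u, hmerge v] at h
      split_ifs at h with h1 h2 h2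
      · exact Or.inl (h1.trans h2.symm)
      · exact Or.inr (Or.inr ⟨h1, h.symm⟩)
      · exact Or.inr (Or.inl ⟨h, h2⟩)
      · exact Or.inl h
    by_cases hC : ∃ u v : V, R.cl t u = R.S t ∧ R.cl t v = R.T t ∧ F.Reachable u v
    · obtain ⟨u1, v1, hu1, hv1, hreach1⟩ := hC
      refine ⟨F, U, hle, ?_, hcost, hrep⟩
      intro u v h
      rcases hnew u v h with h' | ⟨ha, hb⟩ | ⟨ha, hb⟩
      · exact hconn u v h'
      · exact ((hconn u u1 (ha.trans hu1.symm)).trans hreach1).trans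
          (hconn v1 v (hv1.trans hb.symm))
      · exact (((hconn u v1 (ha.trans hv1.symm)).trans hreach1.symm)).trans
          (hconn u1 v (hu1.trans hb.symm))
    · -- augmentation step
      obtain ⟨x, y, hx, hyne, hacty, hwit1⟩ :=
        active_witness d w D Fs R hd hwd hFssol (R.activeS t htl)
      obtain ⟨x', y', hx', hyne', hacty', hwit2⟩ :=
        active_witness d w D Fs R hd hwd hFssol (R.activeT t htl)
      obtain ⟨u0, v0, l, hu0, hv0, hlh, hll, hlc⟩ :=
        exists_chain_superDist d (R.cl t) hd ⟨x, hx⟩ ⟨x', hx'⟩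
      set F' := F ⊔ SimpleGraph.fromEdgeSet ↑(chainEdges (R.cl t) l) with hF'
      have hFF' : F ≤ F' := le_sup_left
      have hchain : F'.Reachable u0 v0 := chain_reachable (R.cl t) F hconn l u0 v0 hlh hll
      obtain ⟨r1, hr1reach, hr1U, hr1max⟩ := hrep u0
      obtain ⟨r2, hr2reach, hr2U, hr2max⟩ := hrep v0
      have hnotF : ¬ F.Reachable u0 v0 := fun h => hC ⟨u0, v0, hu0, hv0, h⟩
      have hr12 : Fs.connectedComponentMk r1 ≠ Fs.connectedComponentMk r2 := by
        intro h
        have h1 : Fs.Reachable r1 r2 := SimpleGraph.ConnectedComponent.eq.mp h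
        exact hnotF ((hr1reach.trans (h1.mono (hle.trans (le_refl F))))
          |>.trans hr2reach.symm)
      -- the two width bounds on the chain cost
      have hδ1 : chainCost d (R.cl t) l ≤ vwidth w D Fs r1 := by
        rw [hlc]
        refine le_trans (R.min_dist t htl (R.S t) (R.cl t y) (R.activeS t htl) hacty
          (Ne.symm hyne)) ?_
        refine le_trans (superDist_le_pDist d (R.cl t) hd hx rfl) ?_
        refine le_trans hwit1 ?_
        exact hr1max x (hconn u0 x (hu0.trans hx.symm))
      have hδ2 : chainCost d (R.cl t) l ≤ vwidth w D Fs r2 := by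
        rw [hlc]
        refine le_trans (R.min_dist t htl (R.T t) (R.cl t y') (R.activeT t htl) hacty'
          (Ne.symm hyne')) ?_
        refine le_trans (superDist_le_pDist d (R.cl t) hd hx' rfl) ?_
        refine le_trans hwit2 ?_
        exact hr2max x' (hconn v0 x' (hv0.trans hx'.symm))
      -- choose which representative to kill
      have key : ∀ a b : V, vwidth w D Fs a ≤ vwidth w D Fs b →
          chainCost d (R.cl t) l ≤ vwidth w D Fs a →
          Fs.connectedComponentMk a ∈ U → Fs.connectedComponentMk b ∈ U →
          Fs.connectedComponentMk a ≠ Fs.connectedComponentMk b →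
          F'.Reachable a b →
          ∃ (F2 : SimpleGraph V) (U2 : Finset Fs.ConnectedComponent),
            Fs ≤ F2 ∧
            (∀ u v : V, R.cl (t+1) u = R.cl (t+1) v → F2.Reachable u v) ∧
            gcost w F2 + ∑ c ∈ U2, compWidth Fs w D c ≤ gcost w Fs + gwidth w Fs D ∧
            RepInv w D Fs F2 U2 := by
        intro a b hcmp hδ haU hbU hne hab
        refine ⟨F', U.erase (Fs.connectedComponentMk a), hle.trans hFF', ?_, ?_, ?_⟩
        · intro u v h
          rcases hnew u v h with h' | ⟨ha', hb'⟩ | ⟨ha', hb'⟩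
          · exact (hconn u v h').mono hFF'
          · exact (((hconn u u0 (ha'.trans hu0.symm)).mono hFF').trans hchain).trans
              ((hconn v0 v (hv0.trans hb'.symm)).mono hFF')
          · exact ((((hconn u v0 (ha'.trans hv0.symm)).mono hFF').trans hchain.symm)).trans
              ((hconn u0 v (hu0.trans hb'.symm)).mono hFF')
        · have hsum : ∑ c ∈ U.erase (Fs.connectedComponentMk a), compWidth Fs w D c
              = ∑ c ∈ U, compWidth Fs w D c - vwidth w D Fs a :=
            Finset.sum_erase_eq_sub haU
          have hcost' : gcost w F' ≤ gcost w F + chainCost d (R.cl t) l :=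
            le_trans (gcost_sup_le w (w_nonneg d w hd hwd) F _)
              (add_le_add_right (gcost_chainEdges_le d (R.cl t) w hd hwd l) _)
          rw [hsum]
          have := hδ
          linarith
        · exact rep_update w D (hle.trans hFF') hFF' hrep hab hbU hne hcmp
      rcases le_total (vwidth w D Fs r1) (vwidth w D Fs r2) with hcmp | hcmp
      · exact key r1 r2 hcmp hδ1 hr1U hr2U hr12
          ((hr1reach.symm.mono hFF').trans (hchain.trans (hr2reach.mono hFF')))
      · exact key r2 r1 hcmp hδ2 hr2U hr1U (Ne.symm hr12)
          ((hr2reach.symm.mono hFF').trans (hchain.symm.trans (hr1reach.mono hFF')))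
end MainSec

/-- Given an optimal Steiner forest `F*` and the final clustering `C^f` of the
gluttonous algorithm, there is a feasible solution `F**` with
`cost(F**) ≤ cost(F*) + width(F*) ≤ 2·cost(F*)` which is faithful to `C^f`:
every supernode of `C^f` is contained in a single tree of `F**`. -/
theorem exists_faithful_near_optimal_solution {V : Type*} [Fintype V] [DecidableEq V]
    (d : V → V → ℝ) (hd : ∀ u v, 0 ≤ d u v) (hdsymm : ∀ u v, d u v = d v u)
    (w : Sym2 V → ℝ) (hwd : ∀ u v : V, w s(u, v) = d u v)
    (D : Finset (V × V))
    (R : GRun V d D)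
    (Fs : SimpleGraph V) (hFsforest : Fs.IsAcyclic)
    (hFssol : ∀ p ∈ D, Fs.Reachable p.1 p.2)
    (hopt : ∀ F : SimpleGraph V, (∀ p ∈ D, F.Reachable p.1 p.2) →
      gcost w Fs ≤ gcost w F) :
    ∃ Fss : SimpleGraph V,
      (∀ p ∈ D, Fss.Reachable p.1 p.2) ∧
      gcost w Fss ≤ gcost w Fs + gwidth w Fs D ∧
      gcost w Fss ≤ 2 * gcost w Fs ∧
      (∀ u v : V, R.cl R.steps u = R.cl R.steps v → Fss.Reachable u v) := by
  obtain ⟨F, U, hle, hconn, hcost, -⟩ :=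
    main_invariant d w D Fs R hd hwd hFssol R.steps le_rfl
  have hw := w_nonneg d w hd hwd
  have hfinal : ∀ p ∈ D, R.cl R.steps p.1 = R.cl R.steps p.2 := by
    intro p hp
    by_contra h
    exact R.final (R.cl R.steps p.1) ⟨p, hp, Or.inl ⟨rfl, fun hh => h hh.symm⟩⟩
  have hsumnn : 0 ≤ ∑ c ∈ U, compWidth Fs w D c :=
    Finset.sum_nonneg fun c _ => compWidth_nonneg w hw Fs D c
  have h1 : gcost w F ≤ gcost w Fs + gwidth w Fs D := by linarith
  refine ⟨F, fun p hp => hconn p.1 p.2 (hfinal p hp), h1, ?_, hconn⟩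
  have h2 := gwidth_le_gcost w Fs hw D hFssol
  rw [two_mul]
  linarith
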